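/- Let μ be a finite Borel measure on [0,∞) and let h > 0. Then d_BL(μ, S*_h μ) ≤ ω(h; μ) + μ([0,∞)) · h. -/

import Mathlib

open MeasureTheory Set

/-- `‖φ‖_BL ≤ 1`: the function `φ` is bounded by `a` and Lipschitz with constant `b`
for some `a + b ≤ 1` (bounded-Lipschitz norm `sup |φ| + Lip(φ)` at most one). -/
def BLnormLEone (φ : ℝ → ℝ) : Prop :=
  ∃ a b : NNReal, (a : ℝ) + (b : ℝ) ≤ 1 ∧ (∀ x, |φ x| ≤ a) ∧ LipschitzWith b φ

/-- The bounded-Lipschitz distance between two finite Borel measures: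
`d_BL(μ,ν) = sup { ∫ φ dμ − ∫ φ dν : ‖φ‖_BL ≤ 1 }`. -/
noncomputable def dBL (μ ν : Measure ℝ) : ℝ :=
  sSup {d : ℝ | ∃ φ : ℝ → ℝ, BLnormLEone φ ∧ d = (∫ x, φ x ∂μ) - ∫ x, φ x ∂ν}

/-- The shifted measure `S*_h μ`: the pushforward under `x ↦ x − h` of the restriction of
`μ` to `[h,∞)`. -/
noncomputable def Sstar (h : ℝ) (μ : Measure ℝ) : Measure ℝ :=
  (μ.restrict (Ici h)).map (fun x => x - h)

/-- The modulus `ω(h; μ) = sup_{x ≥ 0} μ([x, x+h))`. -/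
noncomputable def omegaMeas (h : ℝ) (μ : Measure ℝ) : ℝ :=
  ⨆ x : Ici (0:ℝ), (μ (Ico (x : ℝ) ((x : ℝ) + h))).toReal

/-- continuity of the shift in the BL metric.
For a finite Borel measure `μ` on `[0,∞)` and `h > 0`,
`d_BL(μ, S*_h μ) ≤ ω(h; μ) + μ([0,∞)) h`. -/
theorem shift_BL_estimate
    (μ : Measure ℝ) [IsFiniteMeasure μ] (hsupp : μ (Iio 0) = 0)
    (h : ℝ) (hh : 0 < h) :
    dBL μ (Sstar h μ) ≤ omegaMeas h μ + (μ univ).toReal * h := by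
  have homega_le : (μ (Ico 0 h)).toReal ≤ omegaMeas h μ := by
    have hbdd : BddAbove (Set.range (fun x : Ici (0:ℝ) => (μ (Ico (x:ℝ) ((x:ℝ) + h))).toReal)) := by
      refine ⟨(μ univ).toReal, ?_⟩
      rintro _ ⟨x, rfl⟩
      exact ENNReal.toReal_mono (measure_ne_top μ _) (measure_mono (subset_univ _))
    have := le_ciSup hbdd (⟨0, self_mem_Ici⟩ : Ici (0:ℝ))
    simpa [omegaMeas] using this
  have homega0 : (0:ℝ) ≤ omegaMeas h μ := le_trans ENNReal.toReal_nonneg homega_le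
  have hIci_le : (μ (Ici h)).toReal ≤ (μ univ).toReal :=
    ENNReal.toReal_mono (measure_ne_top μ _) (measure_mono (subset_univ _))
  apply csSup_le
  · exact ⟨0, fun _ => 0, ⟨0, 0, by norm_num, fun x => by simp, LipschitzWith.const 0⟩, by simp⟩
  rintro d ⟨φ, ⟨a, b, hab, hbound, hlip⟩, rfl⟩
  have ha0 : (0:ℝ) ≤ a := a.2
  have hb0 : (0:ℝ) ≤ b := b.2
  have ha1 : (a:ℝ) ≤ 1 := by linarith
  have hb1 : (b:ℝ) ≤ 1 := by linarith
  have hmeas : AEStronglyMeasurable φ μ := hlip.continuous.aestronglyMeasurable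
  have hint : Integrable φ μ :=
    (integrable_const (a:ℝ)).mono' hmeas (ae_of_all _ fun x => by simpa using hbound x)
  have hint2 : Integrable (fun x => φ (x - h)) (μ.restrict (Ici h)) := by
    refine (integrable_const (a:ℝ)).mono' ?_ (ae_of_all _ fun x => by simpa using hbound (x - h))
    exact (hlip.continuous.comp (continuous_id.sub continuous_const)).aestronglyMeasurable
  have hmap : ∫ x, φ x ∂(Sstar h μ) = ∫ x in Ici h, φ (x - h) ∂μ := by
    rw [Sstar, integral_map ((by fun_prop : Measurable fun x : ℝ => x - h)).aemeasurable
      hlip.continuous.aestronglyMeasurable]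
  have hcongr : μ.restrict (Iio h) = μ.restrict (Ico 0 h) := by
    apply Measure.restrict_congr_set
    rw [Filter.eventuallyEq_set]
    have hnull : μ (Iio h \ Ico 0 h) = 0 := by
      refine measure_mono_null ?_ hsupp
      intro x hx
      simp only [mem_diff, mem_Iio, mem_Ico, not_and, not_lt] at hx
      simp only [mem_Iio]
      by_contra hx0
      exact absurd (hx.2 (le_of_not_gt hx0)) (not_le.mpr hx.1)
    have := (measure_eq_zero_iff_ae_notMem (μ := μ)).mp hnull
    filter_upwards [this] with x hx
    simp only [mem_diff, not_and, not_not] at hx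
    constructor
    · intro hxI; exact hx hxI
    · intro hxI; exact hxI.2
  have hsplit : ∫ x, φ x ∂μ = (∫ x in Iio h, φ x ∂μ) + ∫ x in Ici h, φ x ∂μ := by
    have := integral_add_compl (s := Iio h) measurableSet_Iio hint
    rw [compl_Iio] at this
    exact this.symm
  have hdiff : (∫ x, φ x ∂μ) - ∫ x, φ x ∂(Sstar h μ)
      = (∫ x in Ico 0 h, φ x ∂μ) + ∫ x in Ici h, (φ x - φ (x - h)) ∂μ := by
    rw [hmap, hsplit, hcongr, integral_sub hint.integrableOn hint2]
    ring
  have hA : |∫ x in Ico 0 h, φ x ∂μ| ≤ (a:ℝ) * (μ (Ico 0 h)).toReal := by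
    rw [← Real.norm_eq_abs]
    calc ‖∫ x in Ico 0 h, φ x ∂μ‖
        ≤ ∫ _x in Ico 0 h, (a:ℝ) ∂μ :=
          norm_integral_le_of_norm_le (integrable_const _)
            (ae_of_all _ fun x => by simpa using hbound x)
      _ = (μ (Ico 0 h)).toReal * (a:ℝ) := by simp [setIntegral_const, measureReal_def]
      _ = (a:ℝ) * (μ (Ico 0 h)).toReal := mul_comm _ _
  have hptw : ∀ x : ℝ, |φ x - φ (x - h)| ≤ (b:ℝ) * h := by
    intro x
    have := hlip.dist_le_mul x (x - h)
    have hx : x - (x - h) = h := by ring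
    simpa [Real.dist_eq, hx, abs_of_pos hh] using this
  have hB : |∫ x in Ici h, (φ x - φ (x - h)) ∂μ| ≤ (b:ℝ) * h * (μ (Ici h)).toReal := by
    rw [← Real.norm_eq_abs]
    calc ‖∫ x in Ici h, (φ x - φ (x - h)) ∂μ‖
        ≤ ∫ _x in Ici h, (b:ℝ) * h ∂μ :=
          norm_integral_le_of_norm_le (integrable_const _)
            (ae_of_all _ fun x => by simpa using hptw x)
      _ = (μ (Ici h)).toReal * ((b:ℝ) * h) := by simp [setIntegral_const, measureReal_def]
      _ = (b:ℝ) * h * (μ (Ici h)).toReal := mul_comm _ _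
  have hIco0 : (0:ℝ) ≤ (μ (Ico 0 h)).toReal := ENNReal.toReal_nonneg
  have hIci0 : (0:ℝ) ≤ (μ (Ici h)).toReal := ENNReal.toReal_nonneg
  rw [hdiff]
  have h1 : (a:ℝ) * (μ (Ico 0 h)).toReal ≤ omegaMeas h μ := by nlinarith
  have h2 : (b:ℝ) * h * (μ (Ici h)).toReal ≤ (μ univ).toReal * h := by
    nlinarith [mul_le_mul hb1 hIci_le hIci0 zero_le_one, mul_le_mul_of_nonneg_left hIci_le hh.le]
  calc (∫ x in Ico 0 h, φ x ∂μ) + ∫ x in Ici h, (φ x - φ (x - h)) ∂μ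
      ≤ |∫ x in Ico 0 h, φ x ∂μ| + |∫ x in Ici h, (φ x - φ (x - h)) ∂μ| :=
        add_le_add (le_abs_self _) (le_abs_self _)
    _ ≤ (a:ℝ) * (μ (Ico 0 h)).toReal + (b:ℝ) * h * (μ (Ici h)).toReal := add_le_add hA hB
    _ ≤ omegaMeas h μ + (μ univ).toReal * h := add_le_add h1 h2
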